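/- Every σ ∈ T_{p,q}(r,s) with r + s > 0 has exactly k = gcd(r, s, (r+sq)/p) nontrivial cycles, each consisting of r/k 1-steps and s/k q-steps; in particular all elements of T_{p,q}(r,s) have the same cycle type, and sgn(σ) = (-1)^{r+s+gcd(r,s,(r+sq)/p)}. -/

import Mathlib

open Finset

set_option linter.unusedSectionVars false
set_option linter.unusedVariables false
set_option maxHeartbeats 1000000

/-- `T_{p,q}(r,s)`: permutations of `{1,…,p}` (modeled as `ZMod p`) with exactly `p-r-s` fixed
points, exactly `r` indices with `σ j - j ≡ 1`, and exactly `s` indices with `σ j - j ≡ q`. -/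
def Tset (p q r s : ℕ) [NeZero p] : Set (Equiv.Perm (ZMod p)) :=
  {σ | (Finset.univ.filter fun j : ZMod p => σ j = j).card = p - r - s ∧
       (Finset.univ.filter fun j : ZMod p => σ j - j = 1).card = r ∧
       (Finset.univ.filter fun j : ZMod p => σ j - j = (q : ZMod p)).card = s}

def Aset (p : ℕ) [NeZero p] (σ : Equiv.Perm (ZMod p)) (S : Finset (ZMod p)) : Finset (ZMod p) :=
  S.filter fun m => σ m - m = 1

def Bset (p q : ℕ) [NeZero p] (σ : Equiv.Perm (ZMod p)) (S : Finset (ZMod p)) : Finset (ZMod p) :=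
  S.filter fun m => σ m - m = (q : ZMod p)

def cfun (p q : ℕ) [NeZero p] (σ : Equiv.Perm (ZMod p)) (S : Finset (ZMod p)) (x : ZMod p) : ℕ :=
  ((Bset p q σ S).filter fun m => (x - m).val < q).card +
    (if σ x - x = 1 ∧ x ∈ S then 1 else 0)

def gfun (p q : ℕ) [NeZero p] (σ : Equiv.Perm (ZMod p)) (n : ℕ) : ℕ :=
  ((Finset.range n).filter fun i =>
    σ ((((i+1:ℕ) : ZMod p)) - (q:ZMod p)) - ((((i+1:ℕ):ZMod p)) - (q:ZMod p)) = (q:ZMod p)).card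

def Ncard (p q : ℕ) [NeZero p] (σ : Equiv.Perm (ZMod p)) (b₀ b' : ZMod p) : ℕ :=
  ((Bset p q σ Finset.univ).filter fun m =>
    0 < (m - b₀).val ∧ (m - b₀).val ≤ (b' - b₀).val).card

section Aux

variable {p q : ℕ} [NeZero p] {σ : Equiv.Perm (ZMod p)}

lemma cast_val (x : ZMod p) : ((x.val : ℕ) : ZMod p) = x := ZMod.natCast_rightInverse x

variable (hq : 1 < q) (hqp : q < p)
include hq hqp

lemma hp1 : 1 < p := lt_trans hq hqp

lemma castq_ne_zero : (q : ZMod p) ≠ 0 := by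
  intro h
  have := ZMod.val_natCast_of_lt hqp
  rw [h, ZMod.val_zero] at this
  omega

lemma castq_ne_one : (q : ZMod p) ≠ 1 := by
  intro h
  haveI : Fact (1 < p) := ⟨hp1 hq hqp⟩
  have := ZMod.val_natCast_of_lt hqp
  rw [h, ZMod.val_one] at this
  omega

lemma zone_ne_zero : (1 : ZMod p) ≠ 0 := by
  haveI : Fact (1 < p) := ⟨hp1 hq hqp⟩
  exact one_ne_zero

lemma window_step (x m : ZMod p) :
    ((if ((x+1) - m).val < q then 1 else 0) + (if m = x+1-(q:ZMod p) then 1 else 0) : ℕ) =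
    (if (x - m).val < q then 1 else 0) + (if m = x+1 then 1 else 0) := by
  have hp : 1 < p := hp1 hq hqp
  by_cases h1 : m = x + 1
  · have e0 : ((x+1) - m).val = 0 := by rw [h1, sub_self, ZMod.val_zero]
    have h2 : ¬ (m = x + 1 - (q:ZMod p)) := by
      rw [h1]; intro h
      have : (q : ZMod p) = 0 := by
        have := sub_eq_self.mp h.symm
        exact this
      exact castq_ne_zero hq hqp this
    have e1 : (x - m).val = p - 1 := by
      rw [h1]
      have : x - (x + 1) = ((p - 1 : ℕ) : ZMod p) := by
        push_cast [Nat.cast_sub (by omega : 1 ≤ p)]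
        rw [ZMod.natCast_self]
        ring
      rw [this, ZMod.val_natCast_of_lt (by omega)]
    rw [e0, e1, if_pos (by omega : 0 < q), if_neg h2, if_neg (by omega : ¬ (p-1 < q)), if_pos h1]
  · by_cases h2 : m = x + 1 - (q:ZMod p)
    · have e1 : (x - m) = ((q - 1 : ℕ) : ZMod p) := by
        rw [h2]
        push_cast [Nat.cast_sub (by omega : 1 ≤ q)]
        ring
      have e1v : (x - m).val = q - 1 := by rw [e1, ZMod.val_natCast_of_lt (by omega)]
      have e0 : ((x+1) - m) = (q : ZMod p) := by rw [h2]; ring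
      have e0v : ((x+1) - m).val = q := by rw [e0, ZMod.val_natCast_of_lt hqp]
      rw [e0v, e1v, if_neg (lt_irrefl q), if_pos h2, if_pos (by omega : q - 1 < q), if_neg h1]
    · set v := (x - m).val with hv
      have hvp : v < p := ZMod.val_lt _
      have hxm : x - m = (v : ZMod p) := (cast_val _).symm
      have hvne : v ≠ p - 1 := by
        intro h
        apply h1
        have : x - m = -1 := by
          rw [hxm, h]
          push_cast [Nat.cast_sub (by omega : 1 ≤ p)]
          rw [ZMod.natCast_self]; ring
        have : m = x + 1 := by
          have := sub_eq_iff_eq_add.mp this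
          rw [this]; ring
        exact this
      have hvq : v + 1 ≠ q := by
        intro h
        apply h2
        have hc : (q : ZMod p) = (v : ZMod p) + 1 := by
          rw [← h]; push_cast; ring
        rw [hc, ← hxm]; ring
      have e1 : ((x+1) - m).val = v + 1 := by
        have h3 : (x+1) - m = ((v + 1 : ℕ) : ZMod p) := by
          rw [show ((v+1:ℕ):ZMod p) = (v:ZMod p)+1 by push_cast; ring, ← hxm]; ring
        rw [h3, ZMod.val_natCast_of_lt (by omega : v + 1 < p)]
      rw [e1, if_neg h2, if_neg h1, if_congr (by omega : (v + 1 < q ↔ v < q)) rfl rfl]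


omit hq hqp in
lemma zsub_eq_add {a b c : ZMod p} (h : a - b = c) : a = b + c := by rw [← h]; ring

lemma cfun_step (htri : ∀ x : ZMod p, σ x = x ∨ σ x - x = 1 ∨ σ x - x = (q:ZMod p))
    {S : Finset (ZMod p)} (hS : ∀ x, σ x ∈ S ↔ x ∈ S) (x : ZMod p) :
    cfun p q σ S (x+1) = cfun p q σ S x := by
  have hp : 1 < p := hp1 hq hqp
  set B := Bset p q σ S with hB
  have hmemB : ∀ z : ZMod p, z ∈ B ↔ z ∈ S ∧ σ z - z = (q:ZMod p) := by
    intro z; rw [hB, Bset, Finset.mem_filter]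
  have hI : (B.filter fun m => ((x+1) - m).val < q).card + (if x+1-(q:ZMod p) ∈ B then 1 else 0)
      = (B.filter fun m => (x - m).val < q).card + (if x+1 ∈ B then 1 else 0) := by
    rw [Finset.card_filter, Finset.card_filter,
      ← Finset.sum_ite_eq' B (x+1-(q:ZMod p)) (fun _ => (1:ℕ)),
      ← Finset.sum_ite_eq' B (x+1) (fun _ => (1:ℕ)),
      ← Finset.sum_add_distrib, ← Finset.sum_add_distrib]
    exact Finset.sum_congr rfl fun m _ => window_step hq hqp x m
  have hsplit : ∀ z : ZMod p, σ z ≠ z →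
      ((if σ z - z = 1 ∧ z ∈ S then 1 else 0) + (if z ∈ B then 1 else 0) : ℕ)
        = (if z ∈ S then 1 else 0) := by
    intro z hz
    rcases htri z with h|h|h
    · exact absurd h hz
    · have hzq : ¬ (σ z - z = (q:ZMod p)) := by
        rw [h]; intro hh; exact castq_ne_one hq hqp hh.symm
      have hqq : ¬ ((1:ZMod p) = (q:ZMod p)) := fun hh => castq_ne_one hq hqp hh.symm
      by_cases hzS : z ∈ S <;> simp [hmemB, h, hzq, hzS, hqq]
    · have hz1 : ¬ (σ z - z = 1) := by
        rw [h]; intro hh; exact castq_ne_one hq hqp hh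
      have hqq : ¬ ((q:ZMod p) = (1:ZMod p)) := fun hh => castq_ne_one hq hqp hh
      by_cases hzS : z ∈ S <;> simp [hmemB, h, hz1, hzS, hqq]
  have hII : (if σ (x+1) - (x+1) = 1 ∧ (x+1) ∈ S then 1 else 0) + (if x+1 ∈ B then 1 else 0)
      = ((if σ x - x = 1 ∧ x ∈ S then 1 else 0) + (if x+1-(q:ZMod p) ∈ B then 1 else 0) : ℕ) := by
    set y := σ.symm (x+1) with hy'
    have hy : σ y = x + 1 := σ.apply_symm_apply (x+1)
    rcases htri y with h|h|h
    · have hyx : y = x + 1 := by rw [← h, hy]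
      have hfix : σ (x+1) = x+1 := by rw [← hyx]; exact h
      have c1 : ¬ (σ (x+1) - (x+1) = 1 ∧ (x+1) ∈ S) := by
        rintro ⟨h1, -⟩; rw [hfix, sub_self] at h1; exact zone_ne_zero hq hqp h1.symm
      have c2 : ¬ ((x+1) ∈ B) := by
        rw [hmemB]; rintro ⟨-, h2⟩; rw [hfix, sub_self] at h2
        exact castq_ne_zero hq hqp h2.symm
      have c3 : ¬ (σ x - x = 1 ∧ x ∈ S) := by
        rintro ⟨h3, -⟩
        have h5 : σ x = x + 1 := zsub_eq_add h3
        have h6 : x = x + 1 := σ.injective (by rw [h5, hfix])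
        have h7 : (1 : ZMod p) = 0 := by
          have h0 := sub_eq_zero.mpr h6.symm; rw [add_sub_cancel_left] at h0; exact h0
        exact zone_ne_zero hq hqp h7
      have c4 : ¬ ((x+1-(q:ZMod p)) ∈ B) := by
        rw [hmemB]; rintro ⟨-, h4⟩
        have h5 : σ (x+1-(q:ZMod p)) = x + 1 := by rw [zsub_eq_add h4]; ring
        have h6 := σ.injective (by rw [h5, hfix] : σ (x+1-(q:ZMod p)) = σ (x+1))
        exact castq_ne_zero hq hqp (sub_eq_self.mp h6)
      rw [if_neg c1, if_neg c2, if_neg c3, if_neg c4]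
    · have hyx : y = x := by
        have h' : σ y = y + 1 := zsub_eq_add h
        have : y + 1 = x + 1 := by rw [← h', hy]
        exact add_right_cancel this
      rw [hyx] at hy h
      have c4 : ¬ ((x+1-(q:ZMod p)) ∈ B) := by
        rw [hmemB]; rintro ⟨-, h4⟩
        have h5 : σ (x+1-(q:ZMod p)) = x + 1 := by rw [zsub_eq_add h4]; ring
        have h6 := σ.injective (by rw [h5, hy] : σ (x+1-(q:ZMod p)) = σ x)
        have h7 : (q : ZMod p) = 1 := by
          have h8 : (1:ZMod p) - (q:ZMod p) = 0 := by
            have h9 : x + 1 - (q:ZMod p) - x = 0 := by rw [h6]; ring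
            rw [← h9]; ring
          have := sub_eq_zero.mp h8
          exact this.symm
        exact castq_ne_one hq hqp h7
      have hx1 : σ (x+1) ≠ (x+1) := by
        intro hfix
        have h6 : x + 1 = x := σ.injective (by rw [hfix, hy] : σ (x+1) = σ x)
        have h7 : (1 : ZMod p) = 0 := by
          have h0 := sub_eq_zero.mpr h6; rw [add_sub_cancel_left] at h0; exact h0
        exact zone_ne_zero hq hqp h7
      rw [hsplit (x+1) hx1, if_neg c4]
      have hxS : x + 1 ∈ S ↔ x ∈ S := by rw [← hy]; exact hS x
      by_cases hxs : x ∈ S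
      · rw [if_pos (hxS.mpr hxs), if_pos ⟨h, hxs⟩]
      · rw [if_neg (fun hh => hxs (hxS.mp hh)), if_neg (fun hh => hxs hh.2)]
    · have hyx : y = x + 1 - (q:ZMod p) := by
        have h' : σ y = y + (q:ZMod p) := zsub_eq_add h
        have h'' : y + (q:ZMod p) = x + 1 := by rw [← h', hy]
        rw [← h'']; ring
      have c3 : ¬ (σ x - x = 1 ∧ x ∈ S) := by
        rintro ⟨h3, -⟩
        have h5 : σ x = x + 1 := zsub_eq_add h3
        have h6 : x = y := σ.injective (by rw [h5, hy])
        rw [← h6, h3] at h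
        exact castq_ne_one hq hqp h.symm
      have hx1 : σ (x+1) ≠ (x+1) := by
        intro hfix
        have h6 : x + 1 = y := σ.injective (by rw [hfix, hy])
        rw [hyx] at h6
        exact castq_ne_zero hq hqp (sub_eq_self.mp h6.symm)
      rw [hsplit (x+1) hx1, if_neg c3]
      have hyB : (x+1-(q:ZMod p)) ∈ B ↔ y ∈ S := by
        rw [hmemB, ← hyx]
        exact ⟨fun hh => hh.1, fun hh => ⟨hh, h⟩⟩
      have hxS : x + 1 ∈ S ↔ y ∈ S := by rw [← hy]; exact hS y
      by_cases hys : y ∈ S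
      · rw [if_pos (hxS.mpr hys), if_pos (hyB.mpr hys)]
      · rw [if_neg (fun hh => hys (hxS.mp hh)), if_neg (fun hh => hys (hyB.mp hh))]
  unfold cfun
  rw [← hB]
  omega


lemma cfun_const (htri : ∀ x : ZMod p, σ x = x ∨ σ x - x = 1 ∨ σ x - x = (q:ZMod p))
    {S : Finset (ZMod p)} (hS : ∀ x, σ x ∈ S ↔ x ∈ S) (x y : ZMod p) :
    cfun p q σ S x = cfun p q σ S y := by
  suffices h : ∀ n : ℕ, cfun p q σ S ((n:ℕ) : ZMod p) = cfun p q σ S 0 by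
    rw [← cast_val x, ← cast_val y, h, h]
  intro n
  induction n with
  | zero => norm_num
  | succ n ih =>
      have hc : ((n+1 : ℕ) : ZMod p) = ((n:ℕ):ZMod p) + 1 := by push_cast; ring
      rw [hc, cfun_step hq hqp htri hS, ih]

lemma card_window (m : ZMod p) :
    (Finset.univ.filter fun x : ZMod p => (x - m).val < q).card = q := by
  have h : (Finset.univ.filter fun x : ZMod p => (x - m).val < q).card
      = (Finset.range q).card := by
    apply Finset.card_bij' (fun x _ => (x - m).val) (fun i _ => ((i:ℕ) : ZMod p) + m)
    · intro a ha
      rw [Finset.mem_range]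
      exact (Finset.mem_filter.mp ha).2
    · intro i hi
      rw [Finset.mem_range] at hi
      rw [Finset.mem_filter]
      refine ⟨Finset.mem_univ _, ?_⟩
      rw [add_sub_cancel_right, ZMod.val_natCast_of_lt (lt_trans hi hqp)]
      exact hi
    · intro a ha
      rw [cast_val, sub_add_cancel]
    · intro i hi
      rw [Finset.mem_range] at hi
      rw [add_sub_cancel_right, ZMod.val_natCast_of_lt (lt_trans hi hqp)]
  rw [h, Finset.card_range]

lemma cfun_sum (S : Finset (ZMod p)) :
    ∑ x : ZMod p, cfun p q σ S x = q * (Bset p q σ S).card + (Aset p σ S).card := by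
  unfold cfun
  rw [Finset.sum_add_distrib]
  congr 1
  · simp_rw [Finset.card_filter]
    rw [Finset.sum_comm]
    have hinner : ∀ m ∈ Bset p q σ S,
        (∑ x : ZMod p, if (x - m).val < q then (1:ℕ) else 0) = q := by
      intro m _
      rw [← Finset.card_filter]
      exact card_window hq hqp m
    rw [Finset.sum_congr rfl hinner, Finset.sum_const, smul_eq_mul, mul_comm]
  · rw [← Finset.card_filter]
    congr 1
    ext z
    simp [Aset, and_comm]

lemma cfun_value (htri : ∀ x : ZMod p, σ x = x ∨ σ x - x = 1 ∨ σ x - x = (q:ZMod p))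
    {S : Finset (ZMod p)} (hS : ∀ x, σ x ∈ S ↔ x ∈ S) :
    p * cfun p q σ S 0 = q * (Bset p q σ S).card + (Aset p σ S).card := by
  have h1 : ∑ x : ZMod p, cfun p q σ S x = ∑ _x : ZMod p, cfun p q σ S 0 :=
    Finset.sum_congr rfl fun x _ => cfun_const hq hqp htri hS x 0
  rw [Finset.sum_const, Finset.card_univ, ZMod.card, smul_eq_mul] at h1
  rw [← h1, cfun_sum hq hqp]


omit hq hqp in
lemma gfun_succ (n : ℕ) : gfun p q σ (n+1) = gfun p q σ n +
    (if σ ((((n+1:ℕ):ZMod p)) - (q:ZMod p)) - ((((n+1:ℕ):ZMod p)) - (q:ZMod p)) = (q:ZMod p)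
      then 1 else 0) := by
  unfold gfun
  rw [Finset.range_add_one, Finset.filter_insert]
  by_cases h : σ ((((n+1:ℕ):ZMod p)) - (q:ZMod p)) - ((((n+1:ℕ):ZMod p)) - (q:ZMod p)) = (q:ZMod p)
  · rw [if_pos h, if_pos h, Finset.card_insert_of_notMem (by simp)]
  · rw [if_neg h, if_neg h, add_zero]

omit hq hqp in
lemma gfun_add : ∀ δ, δ < p → ∀ n : ℕ,
    gfun p q σ (n + δ) = gfun p q σ n +
      ((Bset p q σ Finset.univ).filter fun m =>
        0 < (m + (q:ZMod p) - ((n:ℕ):ZMod p)).val ∧ (m + (q:ZMod p) - ((n:ℕ):ZMod p)).val ≤ δ).card := by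
  intro δ
  induction δ with
  | zero =>
      intro _ n
      have hemp : ((Bset p q σ Finset.univ).filter fun m =>
          0 < (m + (q:ZMod p) - ((n:ℕ):ZMod p)).val ∧ (m + (q:ZMod p) - ((n:ℕ):ZMod p)).val ≤ 0)
          = ∅ := by
        apply Finset.filter_false_of_mem
        intro m _
        omega
      rw [hemp]
      simp
  | succ δ ih =>
      intro hδp n
      have hδ : δ < p := by omega
      have h1 : n + (δ + 1) = (n + δ) + 1 := by omega
      rw [h1, gfun_succ, ih hδ n]
      set x := ((n:ℕ):ZMod p) with hx
      set m₀ : ZMod p := (((n + δ + 1:ℕ)):ZMod p) - (q:ZMod p) with hm₀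
      have hcast : (((n + δ + 1:ℕ)):ZMod p) = x + (((δ + 1:ℕ)):ZMod p) := by
        rw [hx]; push_cast; ring
      have hvm₀ : (m₀ + (q:ZMod p) - x).val = δ + 1 := by
        rw [hm₀, hcast]
        have : x + ((δ + 1:ℕ):ZMod p) - (q:ZMod p) + (q:ZMod p) - x = ((δ + 1:ℕ):ZMod p) := by
          ring
        rw [this, ZMod.val_natCast_of_lt hδp]
      have hkey : ∀ m : ZMod p, (m + (q:ZMod p) - x).val = δ + 1 → m = m₀ := by
        intro m hm
        have : m + (q:ZMod p) - x = ((δ+1:ℕ) : ZMod p) := by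
          rw [← hm, cast_val]
        rw [hm₀, hcast]
        rw [← this]; ring
      have hcond : (σ ((((n + δ + 1:ℕ)):ZMod p) - (q:ZMod p)) - ((((n + δ + 1:ℕ)):ZMod p) - (q:ZMod p)) = (q:ZMod p))
          ↔ m₀ ∈ Bset p q σ Finset.univ := by
        rw [Bset, Finset.mem_filter, hm₀]
        exact ⟨fun h => ⟨Finset.mem_univ _, h⟩, fun h => h.2⟩
      have h2 : n + δ + 1 = n + (δ + 1) := by omega
      by_cases hm : m₀ ∈ Bset p q σ Finset.univ
      · have hset : ((Bset p q σ Finset.univ).filter fun m =>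
            0 < (m + (q:ZMod p) - x).val ∧ (m + (q:ZMod p) - x).val ≤ δ + 1)
            = insert m₀ ((Bset p q σ Finset.univ).filter fun m =>
                0 < (m + (q:ZMod p) - x).val ∧ (m + (q:ZMod p) - x).val ≤ δ) := by
          ext m
          simp only [Finset.mem_insert, Finset.mem_filter]
          constructor
          · rintro ⟨hmB, hpos, hle⟩
            by_cases hv : (m + (q:ZMod p) - x).val ≤ δ
            · exact Or.inr ⟨hmB, hpos, hv⟩
            · exact Or.inl (hkey m (by omega))
          · rintro (rfl | ⟨hmB, hpos, hle⟩)
            · exact ⟨hm, by omega, by omega⟩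
            · exact ⟨hmB, hpos, by omega⟩
        rw [hset, Finset.card_insert_of_notMem (by
          rw [Finset.mem_filter]
          rintro ⟨-, -, hle⟩
          omega), if_pos (hcond.mpr hm)]
        omega
      · have hset : ((Bset p q σ Finset.univ).filter fun m =>
            0 < (m + (q:ZMod p) - x).val ∧ (m + (q:ZMod p) - x).val ≤ δ + 1)
            = ((Bset p q σ Finset.univ).filter fun m =>
                0 < (m + (q:ZMod p) - x).val ∧ (m + (q:ZMod p) - x).val ≤ δ) := by
          apply Finset.filter_congr
          intro m hmB
          constructor
          · rintro ⟨hpos, hle⟩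
            refine ⟨hpos, ?_⟩
            by_contra hv
            exact hm (hkey m (by omega) ▸ hmB)
          · rintro ⟨hpos, hle⟩
            exact ⟨hpos, by omega⟩
        rw [hset, if_neg (fun h => hm (hcond.mp h)), add_zero]


lemma gfun_period (n : ℕ) :
    gfun p q σ (n + p) = gfun p q σ n + (Bset p q σ Finset.univ).card := by
  have hp : 1 < p := hp1 hq hqp
  have h1 := gfun_add (q := q) (σ := σ) (p-1) (by omega) n
  have h2 := gfun_succ (σ := σ) (q := q) (n + (p-1))
  have h3 : n + (p-1) + 1 = n + p := by omega
  rw [h3] at h2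
  set x := ((n:ℕ):ZMod p) with hx
  set m₁ : ZMod p := x - (q:ZMod p) with hm₁
  have hcast : (((n + p:ℕ)):ZMod p) = x := by
    rw [hx]; push_cast [ZMod.natCast_self]; ring
  have hcond : (σ ((((n + p:ℕ)):ZMod p) - (q:ZMod p)) - ((((n + p:ℕ)):ZMod p) - (q:ZMod p)) = (q:ZMod p))
      ↔ m₁ ∈ Bset p q σ Finset.univ := by
    rw [Bset, Finset.mem_filter, hm₁, hcast]
    exact ⟨fun h => ⟨Finset.mem_univ _, h⟩, fun h => h.2⟩
  have hfil : ((Bset p q σ Finset.univ).filter fun m =>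
      0 < (m + (q:ZMod p) - x).val ∧ (m + (q:ZMod p) - x).val ≤ p - 1)
      = (Bset p q σ Finset.univ).erase m₁ := by
    ext m
    rw [Finset.mem_filter, Finset.mem_erase]
    have hvlt : (m + (q:ZMod p) - x).val < p := ZMod.val_lt _
    constructor
    · rintro ⟨hmB, hpos, -⟩
      refine ⟨?_, hmB⟩
      intro hmm
      rw [hmm, hm₁] at hpos
      have : x - (q:ZMod p) + (q:ZMod p) - x = 0 := by ring
      rw [this, ZMod.val_zero] at hpos
      omega
    · rintro ⟨hne, hmB⟩
      have hpos : 0 < (m + (q:ZMod p) - x).val := by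
        rcases Nat.eq_zero_or_pos (m + (q:ZMod p) - x).val |>.symm with h | h
        · exact h
        · exfalso
          apply hne
          have h0 : m + (q:ZMod p) - x = 0 := by
            rw [← cast_val (m + (q:ZMod p) - x), h, Nat.cast_zero]
          rw [hm₁, ← sub_eq_zero]
          rw [← h0]; ring
      exact ⟨hmB, hpos, by omega⟩

  rw [h1, hfil] at h2
  rw [h2]
  by_cases hm : m₁ ∈ Bset p q σ Finset.univ
  · rw [if_pos (hcond.mpr hm), Finset.card_erase_of_mem hm]
    have : 1 ≤ (Bset p q σ Finset.univ).card := Finset.card_pos.mpr ⟨m₁, hm⟩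
    omega
  · rw [if_neg (fun h => hm (hcond.mp h)), Finset.erase_eq_of_notMem hm, add_zero]

lemma val_window_iff (x m : ZMod p) :
    (0 < (m + (q:ZMod p) - x).val ∧ (m + (q:ZMod p) - x).val ≤ q) ↔ (x - m).val < q := by
  set w := (x - m).val with hwdef
  have hw : x - m = ((w:ℕ) : ZMod p) := (cast_val _).symm
  have hwp : w < p := ZMod.val_lt _
  have hkey : m + (q:ZMod p) - x = (q:ZMod p) - ((w:ℕ):ZMod p) := by
    rw [← hw]; ring
  by_cases hlt : w < q
  · have h1 : (q:ZMod p) - ((w:ℕ):ZMod p) = (((q - w:ℕ)):ZMod p) := by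
      rw [Nat.cast_sub (le_of_lt hlt)]
    have h2 : (m + (q:ZMod p) - x).val = q - w := by
      rw [hkey, h1, ZMod.val_natCast_of_lt (by omega)]
    rw [h2]
    constructor
    · intro _; exact hlt
    · intro _; omega
  · by_cases hwq : w = q
    · have h1 : (m + (q:ZMod p) - x).val = 0 := by
        rw [hkey, hwq, sub_self, ZMod.val_zero]
      rw [h1]
      constructor
      · intro h; omega
      · intro h; omega
    · have h1 : (q:ZMod p) - ((w:ℕ):ZMod p) = (((q + p - w:ℕ)):ZMod p) := by
        rw [Nat.cast_sub (by omega), Nat.cast_add, ZMod.natCast_self, add_zero]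
      have h2 : (m + (q:ZMod p) - x).val = q + p - w := by
        rw [hkey, h1, ZMod.val_natCast_of_lt (by omega)]
      rw [h2]
      constructor
      · intro h; omega
      · intro h; omega

lemma val_window_iff' (z : ZMod p) :
    ((((q - 1 : ℕ)):ZMod p) - z).val < q ↔ z.val < q := by
  set w := z.val with hwdef
  have hw : z = ((w:ℕ) : ZMod p) := (cast_val _).symm
  have hwp : w < p := ZMod.val_lt _
  by_cases hlt : w ≤ q - 1
  · have h1 : (((q - 1:ℕ)):ZMod p) - z = (((q - 1 - w:ℕ)):ZMod p) := by
      rw [hw, ← Nat.cast_sub hlt]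
    rw [h1, ZMod.val_natCast_of_lt (by omega)]
    omega
  · have h1 : (((q - 1:ℕ)):ZMod p) - z = (((q - 1 + p - w:ℕ)):ZMod p) := by
      rw [hw, Nat.cast_sub (by omega : w ≤ q - 1 + p), Nat.cast_add, ZMod.natCast_self, add_zero]
    rw [h1, ZMod.val_natCast_of_lt (by omega)]
    omega

lemma gfun_window (n : ℕ) :
    gfun p q σ (n + q) + (if σ ((n:ℕ):ZMod p) - ((n:ℕ):ZMod p) = 1 ∧ ((n:ℕ):ZMod p) ∈ (Finset.univ : Finset (ZMod p)) then 1 else 0)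
      = gfun p q σ n + cfun p q σ Finset.univ ((n:ℕ):ZMod p) := by
  have h1 := gfun_add (q := q) (σ := σ) q hqp n
  have h2 : ((Bset p q σ Finset.univ).filter fun m =>
      0 < (m + (q:ZMod p) - ((n:ℕ):ZMod p)).val ∧ (m + (q:ZMod p) - ((n:ℕ):ZMod p)).val ≤ q)
      = ((Bset p q σ Finset.univ).filter fun m => (((n:ℕ):ZMod p) - m).val < q) := by
    apply Finset.filter_congr
    intro m _
    rw [val_window_iff hq hqp]
  rw [h1, h2]
  unfold cfun
  omega


omit hq hqp in
lemma modeq_helper {k a b u v : ℕ} (hu : k ∣ u) (hv : k ∣ v) (h : a + u = b + v) :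
    a ≡ b [MOD k] := by
  obtain ⟨u', rfl⟩ := hu
  obtain ⟨v', rfl⟩ := hv
  unfold Nat.ModEq
  rw [← Nat.add_mul_mod_self_left a k u', ← Nat.add_mul_mod_self_left b k v', h]

omit hq hqp in
lemma val_step (x : ZMod p) (d : ℕ) (hd : d < p) (h : σ x = x + (d:ZMod p)) :
    x.val + d = (σ x).val ∨ x.val + d = (σ x).val + p := by
  have h1 : (σ x).val = (x.val + d) % p := by
    rw [h, ZMod.val_add, ZMod.val_natCast_of_lt hd]
  have h2 : x.val < p := ZMod.val_lt x
  rcases Nat.lt_or_ge (x.val + d) p with hlt | hge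
  · left; rw [h1, Nat.mod_eq_of_lt hlt]
  · right
    have h3 : (x.val + d) % p = x.val + d - p := by
      rw [Nat.mod_eq_sub_mod hge, Nat.mod_eq_of_lt (by omega)]
    omega

lemma psi_inv (htri : ∀ x : ZMod p, σ x = x ∨ σ x - x = 1 ∨ σ x - x = (q:ZMod p))
    {k : ℕ} (hks : k ∣ (Bset p q σ Finset.univ).card)
    (hkl : k ∣ cfun p q σ Finset.univ 0) (x : ZMod p) :
    gfun p q σ (σ x).val ≡ gfun p q σ x.val [MOD k] := by
  have hp : 1 < p := hp1 hq hqp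
  rcases htri x with h | h | h
  · rw [h]
  · have hσx : σ x = x + 1 := zsub_eq_add h
    have hstep := val_step (σ := σ) x 1 hp (by rw [hσx, Nat.cast_one])
    have hg : gfun p q σ (x.val + 1) = gfun p q σ x.val := by
      rw [gfun_succ]
      have hc : (((x.val + 1 : ℕ)):ZMod p) = x + 1 := by
        push_cast [cast_val]
        ring
      have hcond : ¬ (σ ((((x.val + 1:ℕ)):ZMod p) - (q:ZMod p)) - ((((x.val + 1:ℕ)):ZMod p) - (q:ZMod p)) = (q:ZMod p)) := by
        rw [hc]
        intro hcc
        have h5 : σ (x+1-(q:ZMod p)) = x + 1 := by rw [zsub_eq_add hcc]; ring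
        have h6 := σ.injective (h5.trans hσx.symm)
        have h7 : (q:ZMod p) = 1 := by
          have h8 : (1:ZMod p) - (q:ZMod p) = 0 := by
            have h9 : x + 1 - (q:ZMod p) - x = 0 := by rw [h6]; ring
            rw [← h9]; ring
          have := sub_eq_zero.mp h8
          exact this.symm
        exact castq_ne_one hq hqp h7
      rw [if_neg hcond, add_zero]
    rcases hstep with he | he
    · rw [← he, hg]
    · have h8 : gfun p q σ (x.val + 1) = gfun p q σ ((σ x).val) + (Bset p q σ Finset.univ).card := by
        rw [he, gfun_period hq hqp]
      exact modeq_helper hks (dvd_zero k) (by omega)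
  · have hσx : σ x = x + (q:ZMod p) := zsub_eq_add h
    have hstep := val_step (σ := σ) x q hqp hσx
    have hwin := gfun_window hq hqp (σ := σ) x.val
    rw [cast_val] at hwin
    have hcond : ¬ (σ x - x = 1 ∧ x ∈ (Finset.univ : Finset (ZMod p))) := by
      rintro ⟨hc, -⟩
      have : (q:ZMod p) = 1 := by rw [← h]; exact hc
      exact castq_ne_one hq hqp this
    rw [if_neg hcond, add_zero] at hwin
    have hval : cfun p q σ Finset.univ x = cfun p q σ Finset.univ 0 :=
      cfun_const hq hqp htri (fun z => by simp) x 0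
    rw [hval] at hwin
    rcases hstep with he | he
    · rw [← he]
      exact modeq_helper (dvd_zero k) hkl (by omega)
    · have h8 : gfun p q σ (x.val + q) = gfun p q σ ((σ x).val) + (Bset p q σ Finset.univ).card := by
        rw [he, gfun_period hq hqp]
      exact modeq_helper hks hkl (by omega)


lemma psi_B_step (htri : ∀ x : ZMod p, σ x = x ∨ σ x - x = 1 ∨ σ x - x = (q:ZMod p))
    {k : ℕ} (hks : k ∣ (Bset p q σ Finset.univ).card)
    (hkl : k ∣ cfun p q σ Finset.univ 0)
    {b b' : ZMod p} (hb : b ∈ Bset p q σ Finset.univ) (hb' : b' ∈ Bset p q σ Finset.univ) :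
    gfun p q σ b'.val ≡ gfun p q σ b.val +
      ((Bset p q σ Finset.univ).filter fun m =>
        0 < (m - b).val ∧ (m - b).val ≤ (b' - b).val).card [MOD k] := by
  have hp : 1 < p := hp1 hq hqp
  have hσb : σ b - b = (q : ZMod p) := (Finset.mem_filter.mp hb).2
  have hσb' : σ b' - b' = (q : ZMod p) := (Finset.mem_filter.mp hb').2
  set δ := (b' - b).val with hδdef
  have hδ : δ < p := ZMod.val_lt _
  have hcastδ : ((δ:ℕ):ZMod p) = b' - b := cast_val _
  set L := cfun p q σ Finset.univ 0 with hL
  have huniv : ∀ z : ZMod p, σ z ∈ (Finset.univ : Finset (ZMod p)) ↔ z ∈ Finset.univ :=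
    fun z => by simp
  have hno1 : ∀ z : ZMod p, σ z - z = (q:ZMod p) → ¬ (σ z - z = 1 ∧ z ∈ (Finset.univ : Finset (ZMod p))) := by
    rintro z hz ⟨hc, -⟩
    exact castq_ne_one hq hqp (by rw [← hz]; exact hc)
  have e1 : gfun p q σ (b.val + q) = gfun p q σ b.val + L := by
    have h := gfun_window hq hqp (σ := σ) b.val
    rw [cast_val] at h
    rw [if_neg (hno1 b hσb), add_zero, cfun_const hq hqp htri huniv b 0, ← hL] at h
    exact h
  have e2 : gfun p q σ (b.val + δ + q) = gfun p q σ (b.val + δ) + L := by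
    have h := gfun_window hq hqp (σ := σ) (b.val + δ)
    have hc : (((b.val + δ : ℕ)):ZMod p) = b' := by
      push_cast [cast_val, hcastδ]
      ring
    rw [hc] at h
    rw [if_neg (hno1 b' hσb'), add_zero, cfun_const hq hqp htri huniv b' 0, ← hL] at h
    exact h
  have e3 : gfun p q σ (b.val + q + δ) = gfun p q σ (b.val + q) +
      ((Bset p q σ Finset.univ).filter fun m =>
        0 < (m - b).val ∧ (m - b).val ≤ δ).card := by
    have h := gfun_add (q := q) (σ := σ) δ hδ (b.val + q)
    have hc : (((b.val + q : ℕ)):ZMod p) = b + (q:ZMod p) := by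
      push_cast [cast_val]
      ring
    have hfc : ∀ m : ZMod p, m + (q:ZMod p) - (((b.val + q : ℕ)):ZMod p) = m - b := by
      intro m; rw [hc]; ring
    simp only [hfc] at h
    exact h
  have e4 : b.val + δ = b'.val ∨ b.val + δ = b'.val + p := by
    have hb'e : b' = b + ((δ:ℕ):ZMod p) := by rw [hcastδ]; ring
    have hv : b'.val = (b.val + δ) % p := by
      rw [hb'e, ZMod.val_add, ZMod.val_natCast_of_lt hδ]
    have h2 : b.val < p := ZMod.val_lt b
    rcases Nat.lt_or_ge (b.val + δ) p with hlt | hge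
    · left; rw [hv, Nat.mod_eq_of_lt hlt]
    · right
      have h3 : (b.val + δ) % p = b.val + δ - p := by
        rw [Nat.mod_eq_sub_mod hge, Nat.mod_eq_of_lt (by omega)]
      omega
  have e5 : b.val + δ + q = b.val + q + δ := by omega
  rcases e4 with he | he
  · refine modeq_helper (dvd_zero k) (dvd_zero k) ?_
    rw [add_zero, add_zero]
    have : gfun p q σ (b.val + δ) + L = gfun p q σ b.val + L +
        ((Bset p q σ Finset.univ).filter fun m =>
          0 < (m - b).val ∧ (m - b).val ≤ δ).card := by
      rw [← e2, e5, e3, e1]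
    rw [← he]
    omega
  · have e6 : gfun p q σ (b.val + δ) = gfun p q σ b'.val + (Bset p q σ Finset.univ).card := by
      rw [he, gfun_period hq hqp]
    refine modeq_helper hks (dvd_zero k) ?_
    rw [add_zero]
    have : gfun p q σ (b.val + δ) + L = gfun p q σ b.val + L +
        ((Bset p q σ Finset.univ).filter fun m =>
          0 < (m - b).val ∧ (m - b).val ≤ δ).card := by
      rw [← e2, e5, e3, e1]
    omega

lemma cyc_inv (htri : ∀ x : ZMod p, σ x = x ∨ σ x - x = 1 ∨ σ x - x = (q:ZMod p))
    {k : ℕ} (hks : k ∣ (Bset p q σ Finset.univ).card)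
    (hkl : k ∣ cfun p q σ Finset.univ 0)
    {C : Equiv.Perm (ZMod p)} (hC : C ∈ σ.cycleFactorsFinset) {x y : ZMod p}
    (hx : x ∈ C.support) (hy : y ∈ C.support) :
    gfun p q σ x.val ≡ gfun p q σ y.val [MOD k] := by
  obtain ⟨hcyc, hfac⟩ := Equiv.Perm.mem_cycleFactorsFinset_iff.mp hC
  have hiter : ∀ i : ℕ, gfun p q σ ((C ^ i) x).val ≡ gfun p q σ x.val [MOD k] := by
    intro i
    induction i with
    | zero => simp [Nat.ModEq.refl]
    | succ i ih =>
        have hz : (C ^ i) x ∈ C.support := Equiv.Perm.pow_apply_mem_support.mpr hx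
        have hCz : C ((C^i) x) = σ ((C^i) x) := hfac _ hz
        have hpow : (C ^ (i+1)) x = C ((C^i) x) := by
          rw [pow_succ', Equiv.Perm.mul_apply]
        rw [hpow, hCz]
        exact (psi_inv hq hqp htri hks hkl _).trans ih
  obtain ⟨i, hi⟩ := hcyc.exists_pow_eq (Equiv.Perm.mem_support.mp hx) (Equiv.Perm.mem_support.mp hy)
  have := hiter i
  rw [hi] at this
  exact this.symm


lemma trichotomy {r s : ℕ} (hrs : r + s ≤ p)
    (hfixc : (Finset.univ.filter fun j : ZMod p => σ j = j).card = p - r - s)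
    (hAc : (Finset.univ.filter fun j : ZMod p => σ j - j = 1).card = r)
    (hBc : (Finset.univ.filter fun j : ZMod p => σ j - j = (q : ZMod p)).card = s) :
    ∀ x : ZMod p, σ x = x ∨ σ x - x = 1 ∨ σ x - x = (q:ZMod p) := by
  set F := Finset.univ.filter fun j : ZMod p => σ j = j with hF
  set A := Finset.univ.filter fun j : ZMod p => σ j - j = 1 with hA
  set B := Finset.univ.filter fun j : ZMod p => σ j - j = (q:ZMod p) with hB
  have hFA : Disjoint F A := by
    rw [Finset.disjoint_left]
    intro a haF haA
    rw [hF, Finset.mem_filter] at haF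
    rw [hA, Finset.mem_filter] at haA
    have := haA.2
    rw [haF.2, sub_self] at this
    exact zone_ne_zero hq hqp this.symm
  have hFB : Disjoint F B := by
    rw [Finset.disjoint_left]
    intro a haF haB
    rw [hF, Finset.mem_filter] at haF
    rw [hB, Finset.mem_filter] at haB
    have := haB.2
    rw [haF.2, sub_self] at this
    exact castq_ne_zero hq hqp this.symm
  have hAB : Disjoint A B := by
    rw [Finset.disjoint_left]
    intro a haA haB
    rw [hA, Finset.mem_filter] at haA
    rw [hB, Finset.mem_filter] at haB
    have := haA.2.symm.trans haB.2
    exact castq_ne_one hq hqp this.symm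
  have hU : F ∪ A ∪ B = Finset.univ := by
    apply Finset.eq_univ_of_card
    rw [Finset.card_union_of_disjoint (by
        rw [Finset.disjoint_union_left]; exact ⟨hFB, hAB⟩),
      Finset.card_union_of_disjoint hFA, hfixc, hAc, hBc, ZMod.card]
    omega
  intro x
  have hx : x ∈ F ∪ A ∪ B := by rw [hU]; exact Finset.mem_univ x
  rw [Finset.mem_union, Finset.mem_union, hF, hA, hB] at hx
  simp only [Finset.mem_filter, Finset.mem_univ, true_and] at hx
  tauto

omit hq hqp in
lemma supp_inv {C : Equiv.Perm (ZMod p)} (hC : C ∈ σ.cycleFactorsFinset) :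
    ∀ x, σ x ∈ C.support ↔ x ∈ C.support := by
  obtain ⟨hcyc, hfac⟩ := Equiv.Perm.mem_cycleFactorsFinset_iff.mp hC
  have himg : C.support.image σ = C.support := by
    apply Finset.eq_of_subset_of_card_le
    · intro y hy
      obtain ⟨x, hx, rfl⟩ := Finset.mem_image.mp hy
      rw [← hfac x hx]
      exact Equiv.Perm.apply_mem_support.mpr hx
    · rw [Finset.card_image_of_injective _ σ.injective]
  intro x
  constructor
  · intro hσx
    rw [← himg] at hσx
    obtain ⟨y, hy, hyx⟩ := Finset.mem_image.mp hσx
    rwa [← σ.injective hyx]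
  · intro hx
    rw [← himg]
    exact Finset.mem_image_of_mem σ hx

lemma cycle_b_count (htri : ∀ x : ZMod p, σ x = x ∨ σ x - x = 1 ∨ σ x - x = (q:ZMod p))
    {C : Equiv.Perm (ZMod p)} (hC : C ∈ σ.cycleFactorsFinset) :
    (Bset p q σ C.support).card * cfun p q σ Finset.univ 0
      = (Bset p q σ Finset.univ).card * cfun p q σ C.support 0 := by
  classical
  have hp : 1 < p := hp1 hq hqp
  have huniv : ∀ z : ZMod p, σ z ∈ (Finset.univ : Finset (ZMod p)) ↔ z ∈ Finset.univ :=
    fun z => by simp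
  have hSC := supp_inv hC
  have haveA : ∀ n ∈ Bset p q σ C.support,
      ((Bset p q σ Finset.univ).filter fun m => (n - m).val < q).card
        = cfun p q σ Finset.univ 0 := by
    intro n hn
    have h := cfun_const hq hqp htri huniv n 0
    rw [← h]
    unfold cfun
    have hno : ¬ (σ n - n = 1 ∧ n ∈ (Finset.univ : Finset (ZMod p))) := by
      rintro ⟨hc, -⟩
      have := (Finset.mem_filter.mp hn).2
      rw [hc] at this
      exact castq_ne_one hq hqp this.symm
    rw [if_neg hno, add_zero]
  have haveB : ∀ m ∈ Bset p q σ Finset.univ,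
      ((Bset p q σ C.support).filter fun n => (n - m).val < q).card
        = cfun p q σ C.support 0 := by
    intro m hm
    have hσm : σ m = m + (q:ZMod p) := zsub_eq_add (Finset.mem_filter.mp hm).2
    have h := cfun_const hq hqp htri hSC (m + (q:ZMod p) - 1) 0
    rw [← h]
    unfold cfun
    have hno : ¬ (σ (m + (q:ZMod p) - 1) - (m + (q:ZMod p) - 1) = 1
        ∧ m + (q:ZMod p) - 1 ∈ C.support) := by
      rintro ⟨hc, -⟩
      have h5 : σ (m + (q:ZMod p) - 1) = m + (q:ZMod p) := by rw [zsub_eq_add hc]; ring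
      have h6 := σ.injective (h5.trans hσm.symm)
      have h7 : (q:ZMod p) = 1 := by
        have h8 : (q:ZMod p) - 1 = 0 := by
          have h9 : m + (q:ZMod p) - 1 - m = (q:ZMod p) - 1 := by ring
          rw [← h9, h6]; ring
        have := sub_eq_zero.mp h8
        exact this
      exact castq_ne_one hq hqp h7
    rw [if_neg hno, add_zero]
    have hcong : ∀ n : ZMod p, ((m + (q:ZMod p) - 1) - n).val < q ↔ (n - m).val < q := by
      intro n
      have hc : (m + (q:ZMod p) - 1) - n = (((q - 1:ℕ)):ZMod p) - (n - m) := by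
        rw [Nat.cast_sub (by omega : 1 ≤ q)]
        push_cast
        ring
      rw [hc, val_window_iff' hq hqp]
    exact congrArg Finset.card (Finset.filter_congr (fun n _ => (hcong n).symm))
  have hsum : ∑ n ∈ Bset p q σ C.support,
      ((Bset p q σ Finset.univ).filter fun m => (n - m).val < q).card
      = ∑ m ∈ Bset p q σ Finset.univ,
      ((Bset p q σ C.support).filter fun n => (n - m).val < q).card := by
    simp_rw [Finset.card_filter]
    exact Finset.sum_comm
  rw [Finset.sum_congr rfl haveA, Finset.sum_congr rfl haveB, Finset.sum_const,
    Finset.sum_const, smul_eq_mul, smul_eq_mul] at hsum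
  exact hsum

lemma card_filter_eq_sum_cycles (P : ZMod p → Prop) [DecidablePred P]
    (hP : ∀ x, P x → σ x ≠ x) :
    (Finset.univ.filter P).card
      = ∑ C ∈ σ.cycleFactorsFinset, (C.support.filter P).card := by
  have hbi : (Finset.univ.filter P)
      = σ.cycleFactorsFinset.biUnion (fun C => C.support.filter P) := by
    ext x
    simp only [Finset.mem_biUnion, Finset.mem_filter, Finset.mem_univ, true_and]
    constructor
    · intro hx
      refine ⟨σ.cycleOf x,
        Equiv.Perm.cycleOf_mem_cycleFactorsFinset_iff.mpr
          (Equiv.Perm.mem_support.mpr (hP x hx)), ?_, hx⟩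
      rw [Equiv.Perm.mem_support_cycleOf_iff]
      exact ⟨Equiv.Perm.SameCycle.refl _ _, Equiv.Perm.mem_support.mpr (hP x hx)⟩
    · rintro ⟨C, hC, hxC, hx⟩
      exact hx
  rw [hbi, Finset.card_biUnion]
  intro C hC D hD hne
  have hdisj : Disjoint C.support D.support :=
    ((Equiv.Perm.cycleFactorsFinset_pairwise_disjoint σ)
      (Finset.mem_coe.mpr hC) (Finset.mem_coe.mpr hD) hne).disjoint_support
  exact Finset.disjoint_filter_filter hdisj


omit hq hqp in
lemma Ncard_lt {b₀ b1 b2 : ZMod p} (hb2 : b2 ∈ Bset p q σ Finset.univ)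
    (hlt : (b1 - b₀).val < (b2 - b₀).val) :
    Ncard p q σ b₀ b1 < Ncard p q σ b₀ b2 := by
  unfold Ncard
  apply Finset.card_lt_card
  have hsub : ((Bset p q σ Finset.univ).filter fun m =>
      0 < (m - b₀).val ∧ (m - b₀).val ≤ (b1 - b₀).val)
      ⊆ ((Bset p q σ Finset.univ).filter fun m =>
      0 < (m - b₀).val ∧ (m - b₀).val ≤ (b2 - b₀).val) := by
    apply Finset.monotone_filter_right
    intro m hm
    exact fun h => ⟨h.1, by have := h.2; omega⟩
  rw [Finset.ssubset_iff_of_subset hsub]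
  refine ⟨b2, Finset.mem_filter.mpr ⟨hb2, by omega, le_rfl⟩, ?_⟩
  rw [Finset.mem_filter]
  rintro ⟨-, -, hle⟩
  omega

lemma Ncard_image {b₀ : ZMod p} (hb₀ : b₀ ∈ Bset p q σ Finset.univ) :
    Finset.image (fun b' => Ncard p q σ b₀ b') (Bset p q σ Finset.univ)
      = Finset.range (Bset p q σ Finset.univ).card := by
  have hinj : Set.InjOn (fun b' => Ncard p q σ b₀ b') (Bset p q σ Finset.univ : Set (ZMod p)) := by
    intro b1 hb1 b2 hb2 heq
    simp only [Finset.mem_coe] at hb1 hb2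
    rcases lt_trichotomy (b1 - b₀).val (b2 - b₀).val with h | h | h
    · exact absurd heq (Nat.ne_of_lt (Ncard_lt hb2 h))
    · have h1 : b1 - b₀ = b2 - b₀ := by
        rw [← cast_val (b1 - b₀), ← cast_val (b2 - b₀), h]
      exact sub_left_inj.mp h1
    · exact absurd heq.symm (Nat.ne_of_lt (Ncard_lt hb1 h))
  apply Finset.eq_of_subset_of_card_le
  · intro j hj
    obtain ⟨b', hb', rfl⟩ := Finset.mem_image.mp hj
    rw [Finset.mem_range]
    have hsub : ((Bset p q σ Finset.univ).filter fun m =>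
        0 < (m - b₀).val ∧ (m - b₀).val ≤ (b' - b₀).val)
        ⊆ (Bset p q σ Finset.univ).erase b₀ := by
      intro m hm
      rw [Finset.mem_filter] at hm
      rw [Finset.mem_erase]
      refine ⟨?_, hm.1⟩
      intro hmb
      rw [hmb, sub_self, ZMod.val_zero] at hm
      omega
    calc Ncard p q σ b₀ b' ≤ ((Bset p q σ Finset.univ).erase b₀).card :=
          Finset.card_le_card hsub
      _ < (Bset p q σ Finset.univ).card := Finset.card_erase_lt_of_mem hb₀
  · rw [Finset.card_range, Finset.card_image_of_injOn hinj]

end Aux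

/-- Every `σ ∈ T_{p,q}(r,s)` with `r + s > 0` has exactly `k = gcd(r, s, (r+sq)/p)` nontrivial
cycles, each with `r/k` 1-steps and `s/k` q-steps; moreover
`sgn(σ) = (-1)^(r + s + gcd(r,s,(r+sq)/p))`. -/
theorem cycle_structure_and_sign (p q r s : ℕ) [NeZero p] (hq : 1 < q) (hqp : q < p)
    (hrs : r + s ≤ p) (hpos : 0 < r + s)
    (σ : Equiv.Perm (ZMod p)) (hσ : σ ∈ Tset p q r s) :
    σ.cycleFactorsFinset.card = Nat.gcd (Nat.gcd r s) ((r + s * q) / p) ∧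
      (∀ C ∈ σ.cycleFactorsFinset,
        (C.support.filter fun j => C j - j = 1).card =
            r / Nat.gcd (Nat.gcd r s) ((r + s * q) / p) ∧
          (C.support.filter fun j => C j - j = (q : ZMod p)).card =
            s / Nat.gcd (Nat.gcd r s) ((r + s * q) / p)) ∧
      Equiv.Perm.sign σ = (-1) ^ (r + s + Nat.gcd (Nat.gcd r s) ((r + s * q) / p)) := by
  classical
  obtain ⟨hfixc, hAc, hBc⟩ := hσ
  have htri : ∀ x : ZMod p, σ x = x ∨ σ x - x = 1 ∨ σ x - x = (q:ZMod p) :=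
    trichotomy hq hqp hrs hfixc hAc hBc
  have huniv : ∀ z : ZMod p, σ z ∈ (Finset.univ : Finset (ZMod p)) ↔ z ∈ Finset.univ :=
    fun z => by simp
  have hBUcard : (Bset p q σ Finset.univ).card = s := hBc
  have hAUcard : (Aset p σ Finset.univ).card = r := hAc
  set L := cfun p q σ Finset.univ 0 with hLdef
  have hLval : p * L = q * s + r := by
    rw [hLdef, cfun_value hq hqp htri huniv, hBUcard, hAUcard]
  have hLpos : 0 < L := by
    rcases Nat.eq_zero_or_pos L with h0 | h
    · rw [h0, Nat.mul_zero] at hLval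
      have h1 := Nat.add_eq_zero.mp hLval.symm
      have h2 : s = 0 := by
        rcases Nat.mul_eq_zero.mp h1.1 with h | h
        · omega
        · exact h
      omega
    · exact h
  have hdiv : r + s * q = p * L := by
    rw [mul_comm s q, hLval]
    exact add_comm r (q * s)
  have hdivgoal : (r + s * q) / p = L := by
    rw [hdiv, Nat.mul_div_cancel_left _ (NeZero.pos p)]
  set k := Nat.gcd s L with hkdef
  have hks : k ∣ s := Nat.gcd_dvd_left s L
  have hkl : k ∣ L := Nat.gcd_dvd_right s L
  have hdr : k ∣ r := by
    have h1 : k ∣ p * L := Dvd.dvd.mul_left hkl p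
    have h2 : k ∣ q * s := Dvd.dvd.mul_left hks q
    have h3 : q * s + r - q * s = r := by omega
    rw [← h3, ← hLval]
    exact Nat.dvd_sub h1 h2
  have hkgoal : Nat.gcd (Nat.gcd r s) ((r + s * q) / p) = k := by
    rw [hdivgoal, Nat.gcd_assoc, ← hkdef, Nat.gcd_eq_right hdr]
  have hkpos : 0 < k := Nat.gcd_pos_of_pos_right s hLpos
  have hks' : k ∣ (Bset p q σ Finset.univ).card := by rw [hBUcard]; exact hks
  have hfacap : ∀ C ∈ σ.cycleFactorsFinset, ∀ x ∈ C.support, C x = σ x :=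
    fun C hC => (Equiv.Perm.mem_cycleFactorsFinset_iff.mp hC).2
  have hCval : ∀ C ∈ σ.cycleFactorsFinset,
      p * cfun p q σ C.support 0
        = q * (Bset p q σ C.support).card + (Aset p σ C.support).card :=
    fun C hC => cfun_value hq hqp htri (supp_inv hC)
  have hCpos : ∀ C ∈ σ.cycleFactorsFinset, 0 < cfun p q σ C.support 0 := by
    intro C hC
    obtain ⟨hcyc, hf⟩ := Equiv.Perm.mem_cycleFactorsFinset_iff.mp hC
    obtain ⟨x, hx, -⟩ := hcyc
    have hxs : x ∈ C.support := Equiv.Perm.mem_support.mpr hx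
    have hσx : σ x ≠ x := by rw [← hf x hxs]; exact hx
    have hpos2 : 0 < q * (Bset p q σ C.support).card + (Aset p σ C.support).card := by
      rcases htri x with h | h | h
      · exact absurd h hσx
      · have hxA : x ∈ Aset p σ C.support := Finset.mem_filter.mpr ⟨hxs, h⟩
        have := Finset.card_pos.mpr ⟨x, hxA⟩
        omega
      · have hxB : x ∈ Bset p q σ C.support := Finset.mem_filter.mpr ⟨hxs, h⟩
        have h1 := Finset.card_pos.mpr ⟨x, hxB⟩
        have h2 : q ≤ q * (Bset p q σ C.support).card := Nat.le_mul_of_pos_right q h1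
        omega
    rcases Nat.eq_zero_or_pos (cfun p q σ C.support 0) with h0 | h
    · exfalso
      have := hCval C hC
      rw [h0, Nat.mul_zero] at this
      omega
    · exact h
  have hbL : ∀ C ∈ σ.cycleFactorsFinset,
      (Bset p q σ C.support).card * L = s * cfun p q σ C.support 0 := by
    intro C hC
    rw [hLdef, cycle_b_count hq hqp htri hC, hBUcard]
  have haL : ∀ C ∈ σ.cycleFactorsFinset,
      (Aset p σ C.support).card * L = r * cfun p q σ C.support 0 := by
    intro C hC
    have h2 : q * ((Bset p q σ C.support).card * L) + (Aset p σ C.support).card * L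
        = q * (s * cfun p q σ C.support 0) + r * cfun p q σ C.support 0 := by
      calc q * ((Bset p q σ C.support).card * L) + (Aset p σ C.support).card * L
          = (q * (Bset p q σ C.support).card + (Aset p σ C.support).card) * L := by ring
        _ = (p * cfun p q σ C.support 0) * L := by rw [← hCval C hC]
        _ = (p * L) * cfun p q σ C.support 0 := by ring
        _ = (q * s + r) * cfun p q σ C.support 0 := by rw [hLval]
        _ = q * (s * cfun p q σ C.support 0) + r * cfun p q σ C.support 0 := by ring
    rw [hbL C hC] at h2
    exact Nat.add_left_cancel h2
  have hsumB : ∑ C ∈ σ.cycleFactorsFinset, (Bset p q σ C.support).card = s := by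
    have hP : ∀ x : ZMod p, σ x - x = (q:ZMod p) → σ x ≠ x := by
      intro x hx hfix
      rw [hfix, sub_self] at hx
      exact castq_ne_zero hq hqp hx.symm
    have h := card_filter_eq_sum_cycles hq hqp (σ := σ) (fun m => σ m - m = (q:ZMod p)) hP
    rw [← hBUcard]
    exact h.symm
  have hsumA : ∑ C ∈ σ.cycleFactorsFinset, (Aset p σ C.support).card = r := by
    have hP : ∀ x : ZMod p, σ x - x = 1 → σ x ≠ x := by
      intro x hx hfix
      rw [hfix, sub_self] at hx
      exact zone_ne_zero hq hqp hx.symm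
    have h := card_filter_eq_sum_cycles hq hqp (σ := σ) (fun m => σ m - m = 1) hP
    rw [← hAUcard]
    exact h.symm
  have hsumL : ∑ C ∈ σ.cycleFactorsFinset, cfun p q σ C.support 0 = L := by
    apply Nat.eq_of_mul_eq_mul_left (NeZero.pos p)
    rw [Finset.mul_sum, Finset.sum_congr rfl hCval, Finset.sum_add_distrib,
      ← Finset.mul_sum, hsumB, hsumA, hLval]
  set l' := L / k with hl'def
  have hLkl' : L = k * l' := (Nat.mul_div_cancel' hkl).symm
  have hl'pos : 0 < l' := by
    rcases Nat.eq_zero_or_pos l' with h0 | h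
    · rw [h0, Nat.mul_zero] at hLkl'; omega
    · exact h
  have hskk : s = k * (s / k) := (Nat.mul_div_cancel' hks).symm
  have hcop : Nat.Coprime (s / k) l' := Nat.coprime_div_gcd_div_gcd hkpos
  have hldvd : ∀ C ∈ σ.cycleFactorsFinset, l' ∣ cfun p q σ C.support 0 := by
    intro C hC
    have h2 : (Bset p q σ C.support).card * l' = (s/k) * cfun p q σ C.support 0 := by
      apply Nat.eq_of_mul_eq_mul_left hkpos
      calc k * ((Bset p q σ C.support).card * l')
          = (Bset p q σ C.support).card * (k * l') := by ring
        _ = (Bset p q σ C.support).card * L := by rw [← hLkl']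
        _ = s * cfun p q σ C.support 0 := hbL C hC
        _ = (k * (s/k)) * cfun p q σ C.support 0 := by rw [← hskk]
        _ = k * ((s/k) * cfun p q σ C.support 0) := by ring
    have h3 : l' ∣ (s/k) * cfun p q σ C.support 0 := by
      rw [← h2]
      exact dvd_mul_left l' _
    exact (hcop.symm).dvd_of_dvd_mul_left h3
  have hlle : ∀ C ∈ σ.cycleFactorsFinset, l' ≤ cfun p q σ C.support 0 :=
    fun C hC => Nat.le_of_dvd (hCpos C hC) (hldvd C hC)
  have htk : (σ.cycleFactorsFinset).card ≤ k := by
    have h1 : (σ.cycleFactorsFinset).card • l' ≤ ∑ C ∈ σ.cycleFactorsFinset, cfun p q σ C.support 0 :=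
      Finset.card_nsmul_le_sum _ _ _ hlle
    rw [hsumL, smul_eq_mul, hLkl'] at h1
    have h2 : (σ.cycleFactorsFinset).card * l' ≤ k * l' := h1
    exact Nat.le_of_mul_le_mul_right h2 hl'pos
  have hkt : k ≤ (σ.cycleFactorsFinset).card := by
    by_cases hs0 : s = 0
    · have hk1 : k = L := by rw [hkdef, hs0, Nat.gcd_zero_left]
      have hr0 : 0 < r := by omega
      have hL1 : L = 1 := by
        have h1 : p * L = r := by rw [hLval, hs0, Nat.mul_zero, Nat.zero_add]
        have h2 : p * L ≤ p * 1 := by omega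
        have h3 : L ≤ 1 := Nat.le_of_mul_le_mul_left h2 (NeZero.pos p)
        omega
      rw [hk1, hL1]
      have hne : σ ≠ 1 := by
        have hA : 0 < (Aset p σ Finset.univ).card := by rw [hAUcard]; exact hr0
        obtain ⟨x, hx⟩ := Finset.card_pos.mp hA
        have hx1 : σ x - x = 1 := (Finset.mem_filter.mp hx).2
        intro h1
        rw [h1] at hx1
        simp only [Equiv.Perm.one_apply, sub_self] at hx1
        exact zone_ne_zero hq hqp hx1.symm
      have hne' : σ.cycleFactorsFinset ≠ ∅ :=
        fun h => hne (Equiv.Perm.cycleFactorsFinset_eq_empty_iff.mp h)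
      exact Finset.card_pos.mpr (Finset.nonempty_of_ne_empty hne')
    · have hspos : 0 < s := Nat.pos_of_ne_zero hs0
      have hBUpos : 0 < (Bset p q σ Finset.univ).card := by rw [hBUcard]; exact hspos
      obtain ⟨b₀, hb₀⟩ := Finset.card_pos.mp hBUpos
      have himg := Ncard_image hq hqp (σ := σ) hb₀
      have hkls : k ≤ s := Nat.le_of_dvd hspos hks
      have hsurj : ∀ j, j < s → ∃ b, b ∈ Bset p q σ Finset.univ ∧ Ncard p q σ b₀ b = j := by
        intro j hj
        have hjm : j ∈ Finset.range (Bset p q σ Finset.univ).card := by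
          rw [hBUcard]; exact Finset.mem_range.mpr hj
        rw [← himg] at hjm
        obtain ⟨b, hb, hbj⟩ := Finset.mem_image.mp hjm
        exact ⟨b, hb, hbj⟩
      set pick : ℕ → ZMod p := fun j =>
        if h : ∃ b, b ∈ Bset p q σ Finset.univ ∧ Ncard p q σ b₀ b = j then h.choose else 0
        with hpickdef
      have hpick : ∀ j, j < s →
          pick j ∈ Bset p q σ Finset.univ ∧ Ncard p q σ b₀ (pick j) = j := by
        intro j hj
        have h := hsurj j hj
        rw [hpickdef]
        simp only [dif_pos h]
        exact h.choose_spec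
      have hpicksupp : ∀ j, j < s → pick j ∈ σ.support := by
        intro j hj
        have h1 := (hpick j hj).1
        have h2 : σ (pick j) - pick j = (q:ZMod p) := (Finset.mem_filter.mp h1).2
        rw [Equiv.Perm.mem_support]
        intro hfix
        rw [hfix, sub_self] at h2
        exact castq_ne_zero hq hqp h2.symm
      have hmain : (Finset.range k).card ≤ (σ.cycleFactorsFinset).card := by
        apply Finset.card_le_card_of_injOn (fun j => σ.cycleOf (pick j))
        · intro j hj
          rw [Finset.mem_coe, Finset.mem_range] at hj
          exact Equiv.Perm.cycleOf_mem_cycleFactorsFinset_iff.mpr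
            (hpicksupp j (lt_of_lt_of_le hj hkls))
        · intro j1 hj1 j2 hj2 heq
          simp only [Finset.mem_coe, Finset.mem_range] at hj1 hj2
          have hs1 : j1 < s := lt_of_lt_of_le hj1 hkls
          have hs2 : j2 < s := lt_of_lt_of_le hj2 hkls
          have hC : σ.cycleOf (pick j1) ∈ σ.cycleFactorsFinset :=
            Equiv.Perm.cycleOf_mem_cycleFactorsFinset_iff.mpr (hpicksupp j1 hs1)
          have hm1 : pick j1 ∈ (σ.cycleOf (pick j1)).support := by
            rw [Equiv.Perm.mem_support_cycleOf_iff]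
            exact ⟨Equiv.Perm.SameCycle.refl _ _, hpicksupp j1 hs1⟩
          have hm2 : pick j2 ∈ (σ.cycleOf (pick j1)).support := by
            have heq' : σ.cycleOf (pick j1) = σ.cycleOf (pick j2) := heq
            rw [heq', Equiv.Perm.mem_support_cycleOf_iff]
            exact ⟨Equiv.Perm.SameCycle.refl _ _, hpicksupp j2 hs2⟩
          have hinv : gfun p q σ (pick j1).val ≡ gfun p q σ (pick j2).val [MOD k] :=
            cyc_inv hq hqp htri hks' hkl hC hm1 hm2
          have hst1 : gfun p q σ (pick j1).val ≡ gfun p q σ b₀.val + j1 [MOD k] := by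
            have h := psi_B_step hq hqp htri hks' hkl hb₀ (hpick j1 hs1).1
            rw [show ((Bset p q σ Finset.univ).filter fun m =>
              0 < (m - b₀).val ∧ (m - b₀).val ≤ (pick j1 - b₀).val).card
                = Ncard p q σ b₀ (pick j1) from rfl, (hpick j1 hs1).2] at h
            exact h
          have hst2 : gfun p q σ (pick j2).val ≡ gfun p q σ b₀.val + j2 [MOD k] := by
            have h := psi_B_step hq hqp htri hks' hkl hb₀ (hpick j2 hs2).1
            rw [show ((Bset p q σ Finset.univ).filter fun m =>
              0 < (m - b₀).val ∧ (m - b₀).val ≤ (pick j2 - b₀).val).card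
                = Ncard p q σ b₀ (pick j2) from rfl, (hpick j2 hs2).2] at h
            exact h
          have hj12 : gfun p q σ b₀.val + j1 ≡ gfun p q σ b₀.val + j2 [MOD k] :=
            (hst1.symm.trans hinv).trans hst2
          have hj12' : j1 ≡ j2 [MOD k] := Nat.ModEq.add_left_cancel' _ hj12
          have hmod : j1 % k = j2 % k := hj12'
          rw [Nat.mod_eq_of_lt hj1, Nat.mod_eq_of_lt hj2] at hmod
          exact hmod
      rw [Finset.card_range] at hmain
      exact hmain
  have htkeq : (σ.cycleFactorsFinset).card = k := le_antisymm htk hkt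
  have hlCeq : ∀ C ∈ σ.cycleFactorsFinset, cfun p q σ C.support 0 = l' := by
    have hsum2 : ∑ _C ∈ σ.cycleFactorsFinset, l'
        = ∑ C ∈ σ.cycleFactorsFinset, cfun p q σ C.support 0 := by
      rw [Finset.sum_const, hsumL, smul_eq_mul, htkeq, ← hLkl']
    have h := (Finset.sum_eq_sum_iff_of_le hlle).mp hsum2
    intro C hC
    exact (h C hC).symm
  have hbCeq : ∀ C ∈ σ.cycleFactorsFinset, (Bset p q σ C.support).card = s / k := by
    intro C hC
    apply Nat.eq_of_mul_eq_mul_right hLpos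
    calc (Bset p q σ C.support).card * L = s * cfun p q σ C.support 0 := hbL C hC
      _ = s * l' := by rw [hlCeq C hC]
      _ = (k * (s/k)) * l' := by rw [← hskk]
      _ = (s/k) * (k * l') := by ring
      _ = (s/k) * L := by rw [← hLkl']
  have hrkk : r = k * (r / k) := (Nat.mul_div_cancel' hdr).symm
  have haCeq : ∀ C ∈ σ.cycleFactorsFinset, (Aset p σ C.support).card = r / k := by
    intro C hC
    apply Nat.eq_of_mul_eq_mul_right hLpos
    calc (Aset p σ C.support).card * L = r * cfun p q σ C.support 0 := haL C hC
      _ = r * l' := by rw [hlCeq C hC]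
      _ = (k * (r/k)) * l' := by rw [← hrkk]
      _ = (r/k) * (k * l') := by ring
      _ = (r/k) * L := by rw [← hLkl']
  refine ⟨?_, ?_, ?_⟩
  · rw [hkgoal]; exact htkeq
  · intro C hC
    have hfC := hfacap C hC
    constructor
    · have hA' : C.support.filter (fun j => C j - j = 1) = Aset p σ C.support := by
        apply Finset.filter_congr
        intro j hj
        rw [hfC j hj]
      rw [hkgoal, hA']
      exact haCeq C hC
    · have hB' : C.support.filter (fun j => C j - j = (q:ZMod p)) = Bset p q σ C.support := by
        apply Finset.filter_congr
        intro j hj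
        rw [hfC j hj]
      rw [hkgoal, hB']
      exact hbCeq C hC
  · have hsupp : σ.support.card = r + s := by
      have hU : σ.support = (Aset p σ Finset.univ) ∪ (Bset p q σ Finset.univ) := by
        ext x
        simp only [Equiv.Perm.mem_support, Finset.mem_union, Aset, Bset, Finset.mem_filter,
          Finset.mem_univ, true_and]
        constructor
        · intro hx
          rcases htri x with h | h | h
          · exact absurd h hx
          · exact Or.inl h
          · exact Or.inr h
        · rintro (h | h) hfix
          · rw [hfix, sub_self] at h
            exact zone_ne_zero hq hqp h.symm
          · rw [hfix, sub_self] at h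
            exact castq_ne_zero hq hqp h.symm
      have hdisjAB : Disjoint (Aset p σ Finset.univ) (Bset p q σ Finset.univ) := by
        rw [Finset.disjoint_left]
        intro a ha hb
        have h1 := (Finset.mem_filter.mp ha).2
        have h2 := (Finset.mem_filter.mp hb).2
        rw [h1] at h2
        exact castq_ne_one hq hqp h2.symm
      rw [hU, Finset.card_union_of_disjoint hdisjAB, hAUcard, hBUcard]
    rw [Equiv.Perm.sign_of_cycleType, Equiv.Perm.sum_cycleType, hsupp]
    have hct : Multiset.card σ.cycleType = (σ.cycleFactorsFinset).card := by
      rw [Equiv.Perm.cycleType_def, Multiset.card_map]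
      rfl
    rw [hct, htkeq, hkgoal]
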